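/- If r is the unique positive definite fixed point of Ricc_ϖ with ϖ = (γγ')^{-1} for invertible γ, then r̂ defined by r̂^{-1} = I + γ' r γ is the unique positive definite fixed point of Ricc_{ϖ̄} with ϖ̄ = (γ'γ)^{-1}. -/

import Mathlib

open Matrix

section Aux

variable {d : ℕ}

private lemma diag_XAXt (A X : Matrix (Fin d) (Fin d) ℝ) (i : Fin d) :
    (X * A * Xᵀ) i i = (X i) ⬝ᵥ (A *ᵥ (X i)) := by
  simp only [Matrix.mul_apply, Matrix.transpose_apply, dotProduct, Matrix.mulVec,
    Finset.sum_mul, Finset.mul_sum]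
  rw [Finset.sum_comm]
  refine Finset.sum_congr rfl fun j _ => Finset.sum_congr rfl fun k _ => by ring

private lemma trace_quad_nonneg {A : Matrix (Fin d) (Fin d) ℝ} (hA : A.PosDef)
    (X : Matrix (Fin d) (Fin d) ℝ) : 0 ≤ (X * A * Xᵀ).trace := by
  rw [Matrix.trace]
  refine Finset.sum_nonneg fun i _ => ?_
  rw [Matrix.diag_apply, diag_XAXt]
  simpa using hA.posSemidef.dotProduct_mulVec_nonneg (X i)

private lemma eq_zero_of_trace_quad_eq_zero {A X : Matrix (Fin d) (Fin d) ℝ} (hA : A.PosDef)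
    (h : (X * A * Xᵀ).trace = 0) : X = 0 := by
  by_contra hX
  obtain ⟨i, hi⟩ : ∃ i, X i ≠ 0 := by
    by_contra h'
    push_neg at h'
    exact hX (by ext i j; simpa using congrFun (h' i) j)
  rw [Matrix.trace] at h
  have hzero : (X * A * Xᵀ).diag i = 0 := by
    refine (Finset.sum_eq_zero_iff_of_nonneg fun j _ => ?_).mp h i (Finset.mem_univ i)
    rw [Matrix.diag_apply, diag_XAXt]
    simpa using hA.posSemidef.dotProduct_mulVec_nonneg (X j)
  rw [Matrix.diag_apply, diag_XAXt] at hzero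
  have hpos := hA.dotProduct_mulVec_pos hi
  simp only [star_trivial] at hpos
  linarith

private lemma posDef_conj {A B : Matrix (Fin d) (Fin d) ℝ} (hA : A.PosDef) (hB : IsUnit B) :
    (Bᵀ * A * B).PosDef := by
  have hAt : Aᵀ = A := by
    rw [← conjTranspose_eq_transpose_of_trivial]; exact hA.1
  refine Matrix.posDef_iff_dotProduct_mulVec.mpr ⟨?_, ?_⟩
  · show (Bᵀ * A * B)ᴴ = _
    rw [conjTranspose_eq_transpose_of_trivial]
    rw [Matrix.transpose_mul, Matrix.transpose_mul, transpose_transpose, hAt, Matrix.mul_assoc]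
  · intro x hx
    have hBx : B *ᵥ x ≠ 0 := by
      intro h0
      apply hx
      have hinj := Matrix.mulVec_injective_iff_isUnit.mpr hB
      apply hinj
      simpa using h0
    have hq := hA.dotProduct_mulVec_pos hBx
    simp only [star_trivial] at hq ⊢
    calc x ⬝ᵥ ((Bᵀ * A * B) *ᵥ x) = x ⬝ᵥ (Bᵀ *ᵥ ((A * B) *ᵥ x)) := by
          rw [Matrix.mul_assoc, ← Matrix.mulVec_mulVec]
      _ = (B *ᵥ x) ⬝ᵥ ((A * B) *ᵥ x) := by
          rw [Matrix.dotProduct_mulVec, Matrix.vecMul_transpose]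
      _ = (B *ᵥ x) ⬝ᵥ (A *ᵥ (B *ᵥ x)) := by rw [← Matrix.mulVec_mulVec]
      _ > 0 := hq

private lemma quad_of_fix {W s : Matrix (Fin d) (Fin d) ℝ} (hW : W.PosDef) (hs : s.PosDef)
    (hfix : s = (1 + (W + s)⁻¹)⁻¹) : s * s + s * W = W := by
  have hu : (W + s).PosDef := hW.add hs
  have hv : (1 + (W + s)⁻¹).PosDef := Matrix.PosDef.one.add hu.inv
  haveI := hu.isUnit.invertible
  haveI := hv.isUnit.invertible
  have h1 : s * (1 + (W + s)⁻¹) = 1 := by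
    nth_rewrite 1 [hfix]
    exact inv_mul_of_invertible (1 + (W + s)⁻¹)
  have e2 : (1 + (W + s)⁻¹) * (W + s) = (W + s) + 1 := by
    rw [add_mul, one_mul, inv_mul_of_invertible]
  have h2 : s * ((W + s) + 1) = W + s := by
    rw [← e2, ← Matrix.mul_assoc, h1, one_mul]
  rw [mul_add, mul_one, mul_add] at h2
  -- h2 : s * W + s * s + s = W + s
  have h3 : s * W + s * s = W := add_right_cancel h2
  rw [add_comm]; exact h3

private lemma fix_of_quad {W s : Matrix (Fin d) (Fin d) ℝ} (hW : W.PosDef) (hs : s.PosDef)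
    (hq : s * s + s * W = W) : s = (1 + (W + s)⁻¹)⁻¹ := by
  have hu : (W + s).PosDef := hW.add hs
  haveI := hu.isUnit.invertible
  have h1 : (1 - s) * (W + s) = s := by
    have e : (1 - s) * (W + s) = (W + s) - (s * s + s * W) := by noncomm_ring
    rw [e, hq, add_sub_cancel_left]
  have h2 : s * (1 + (W + s)⁻¹) = 1 := by
    have hsu : s * (W + s)⁻¹ = 1 - s := by
      calc s * (W + s)⁻¹ = (1 - s) * (W + s) * (W + s)⁻¹ := by rw [h1]
        _ = (1 - s) * ((W + s) * (W + s)⁻¹) := by rw [Matrix.mul_assoc]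
        _ = 1 - s := by rw [mul_inv_of_invertible, mul_one]
    rw [mul_add, mul_one, hsu]
    abel
  exact (Matrix.inv_eq_left_inv h2).symm

private lemma quad_uniq {W s₁ s₂ : Matrix (Fin d) (Fin d) ℝ} (hW : W.PosDef)
    (h1 : s₁.PosDef) (h2 : s₂.PosDef)
    (hq1 : s₁ * s₁ + s₁ * W = W) (hq2 : s₂ * s₂ + s₂ * W = W) : s₁ = s₂ := by
  set D := s₁ - s₂ with hD
  have hC : (s₂ + W).PosDef := h2.add hW
  have hkey : s₁ * D = -(D * (s₂ + W)) := by
    have e : s₁ * D + D * (s₂ + W) = (s₁ * s₁ + s₁ * W) - (s₂ * s₂ + s₂ * W) := by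
      rw [hD]; noncomm_ring
    rw [hq1, hq2, sub_self] at e
    exact eq_neg_of_add_eq_zero_left e
  have hTa : 0 ≤ (Dᵀ * s₁ * D).trace := by
    simpa [transpose_transpose] using trace_quad_nonneg h1 Dᵀ
  have hTb : (Dᵀ * s₁ * D).trace = -((D * (s₂ + W) * Dᵀ).trace) := by
    rw [Matrix.mul_assoc, hkey, mul_neg, Matrix.trace_neg,
      Matrix.trace_mul_comm Dᵀ (D * (s₂ + W))]
  have hTc : 0 ≤ (D * (s₂ + W) * Dᵀ).trace := trace_quad_nonneg hC D
  have hT0 : (D * (s₂ + W) * Dᵀ).trace = 0 := by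
    rw [hTb] at hTa; linarith
  have hD0 : D = 0 := eq_zero_of_trace_quad_eq_zero hC hT0
  have := sub_eq_zero.mp (hD ▸ hD0)
  exact this

private lemma inv_quad_of_sq {M A : Matrix (Fin d) (Fin d) ℝ} [Invertible M] [Invertible A]
    (h : M * M = M + A) : M⁻¹ * M⁻¹ + M⁻¹ * A⁻¹ = A⁻¹ := by
  have h1 : M⁻¹ * M⁻¹ * (M * M) * A⁻¹ = M⁻¹ * M⁻¹ * (M + A) * A⁻¹ := by rw [h]
  have e1 : M⁻¹ * M⁻¹ * (M * M) * A⁻¹ = A⁻¹ := by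
    simp [Matrix.mul_assoc]
  have e2 : M⁻¹ * M⁻¹ * (M + A) * A⁻¹ = M⁻¹ * A⁻¹ + M⁻¹ * M⁻¹ := by
    simp [mul_add, add_mul, Matrix.mul_assoc]
  rw [e1, e2] at h1
  rw [add_comm]
  exact h1.symm

end Aux

/-- If `r` is the (unique) positive definite fixed point of `Ricc_ϖ` with `ϖ = (γγᵀ)⁻¹` for an
invertible matrix `γ`, then `r̂` defined by `r̂⁻¹ = I + γᵀ r γ` is the unique positive definite
fixed point of `Ricc_ϖ̄` with `ϖ̄ = (γᵀγ)⁻¹`. -/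
theorem dual_riccati_fixed_point {d : ℕ} (γ r : Matrix (Fin d) (Fin d) ℝ)
    (hγ : IsUnit γ) (hr : r.PosDef)
    (hfix : r = (1 + ((γ * γᵀ)⁻¹ + r)⁻¹)⁻¹) :
    ((1 + γᵀ * r * γ)⁻¹).PosDef ∧
    (1 + γᵀ * r * γ)⁻¹ = (1 + ((γᵀ * γ)⁻¹ + (1 + γᵀ * r * γ)⁻¹)⁻¹)⁻¹ ∧
    ∀ s : Matrix (Fin d) (Fin d) ℝ, s.PosDef →
      s = (1 + ((γᵀ * γ)⁻¹ + s)⁻¹)⁻¹ → s = (1 + γᵀ * r * γ)⁻¹ := by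
  have hγt : IsUnit γᵀ := (Matrix.isUnit_transpose γ).mpr hγ
  have hG : (γ * γᵀ).PosDef := by
    simpa [transpose_transpose, Matrix.mul_one] using
      posDef_conj (Matrix.PosDef.one (n := Fin d) (R := ℝ)) hγt
  have hA : (γᵀ * γ).PosDef := by
    simpa [Matrix.mul_one] using posDef_conj (Matrix.PosDef.one (n := Fin d) (R := ℝ)) hγ
  haveI := hG.isUnit.invertible
  haveI := hA.isUnit.invertible
  have hW1 : ((γ * γᵀ)⁻¹).PosDef := hG.inv
  have hq1 : r * r + r * (γ * γᵀ)⁻¹ = (γ * γᵀ)⁻¹ := quad_of_fix hW1 hr hfix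
  have hP : r * r * (γ * γᵀ) + r = 1 := by
    have h := congrArg (fun X => X * (γ * γᵀ)) hq1
    simp only [add_mul] at h
    rw [Matrix.mul_assoc r ((γ * γᵀ)⁻¹) (γ * γᵀ), inv_mul_of_invertible, mul_one] at h
    exact h
  have hrT : rᵀ = r := by rw [← conjTranspose_eq_transpose_of_trivial]; exact hr.1
  have hWT : ((γ * γᵀ)⁻¹)ᵀ = (γ * γᵀ)⁻¹ := by
    rw [← conjTranspose_eq_transpose_of_trivial]; exact hW1.1
  have hq1t : r * r + (γ * γᵀ)⁻¹ * r = (γ * γᵀ)⁻¹ := by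
    have h := congrArg Matrix.transpose hq1
    simpa [Matrix.transpose_add, Matrix.transpose_mul, hrT, hWT] using h
  have hcomm : r * (γ * γᵀ) = (γ * γᵀ) * r := by
    have h0 : r * (γ * γᵀ)⁻¹ = (γ * γᵀ)⁻¹ * r := add_left_cancel (hq1.trans hq1t.symm)
    have h := congrArg (fun X => (γ * γᵀ) * X * (γ * γᵀ)) h0
    simpa [Matrix.mul_assoc] using h.symm
  have hkey : r + r * (γ * γᵀ) * r = 1 := by
    have e : r * (γ * γᵀ) * r = r * r * (γ * γᵀ) := by
      rw [Matrix.mul_assoc, ← hcomm, ← Matrix.mul_assoc]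
    rw [e, add_comm]; exact hP
  have hMpos : (1 + γᵀ * r * γ).PosDef := Matrix.PosDef.one.add (posDef_conj hr hγ)
  haveI := hMpos.isUnit.invertible
  have hM : (1 + γᵀ * r * γ) * (1 + γᵀ * r * γ) = (1 + γᵀ * r * γ) + γᵀ * γ := by
    have expand : (1 + γᵀ * r * γ) * (1 + γᵀ * r * γ)
        = 1 + γᵀ * r * γ + γᵀ * (r + r * (γ * γᵀ) * r) * γ := by noncomm_ring
    rw [expand, hkey, Matrix.mul_one]
  have hq2 : (1 + γᵀ * r * γ)⁻¹ * (1 + γᵀ * r * γ)⁻¹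
      + (1 + γᵀ * r * γ)⁻¹ * (γᵀ * γ)⁻¹ = (γᵀ * γ)⁻¹ :=
    inv_quad_of_sq hM
  refine ⟨hMpos.inv, fix_of_quad hA.inv hMpos.inv hq2, fun s hs hsfix => ?_⟩
  exact quad_uniq hA.inv hs hMpos.inv (quad_of_fix hA.inv hs hsfix) hq2
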